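/- (Inexact accelerated coupling step, second form.) Let f : R^n → R be differentiable, L-smooth and σ-strongly convex with L, σ > 0, and let x* be its minimizer. Let τ ∈ (0,1), η = 1/(τL), and ε̃ ≥ 0. Suppose y_k, z_k, x_{k+1}, y_{k+1}, z_{k+1} ∈ R^n and g ∈ R^n satisfy x_{k+1} = τ z_k + (1−τ) y_k, ‖g − ∇f(x_{k+1})‖ ≤ ε̃, y_{k+1} = x_{k+1} − (1/L) g, and z_{k+1} = (1/(1+ησ))(z_k + ησ x_{k+1} − η g). Then 0 ≤ ((1−τ)η/τ)(f(y_k) − f(x*)) − (η/τ)(f(y_{k+1}) − f(x*)) + (1/2)‖z_k − x*‖² − ((1 + ησ/2)/2)‖z_{k+1} − x*‖² + ε̃²(η/σ + η²/2). -/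

import Mathlib

open RealInnerProductSpace


lemma smooth_upper {n : ℕ} (f : EuclideanSpace ℝ (Fin n) → ℝ) (L : ℝ) (hL : 0 < L)
    (hdiff : Differentiable ℝ f)
    (hsmooth : ∀ x y, ‖gradient f x - gradient f y‖ ≤ L * ‖x - y‖) (x y : EuclideanSpace ℝ (Fin n)) :
    f y ≤ f x + ⟪gradient f x, y - x⟫ + L / 2 * ‖y - x‖ ^ 2 := by
  set v := y - x with hv
  have hγ : ∀ t : ℝ, HasDerivAt (fun t : ℝ => x + t • v) v t := by
    intro t
    simpa using ((hasDerivAt_id t).smul_const v).const_add x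
  have hφ : ∀ t : ℝ, HasDerivAt (fun t : ℝ => f (x + t • v))
      ⟪gradient f (x + t • v), v⟫ t := by
    intro t
    have hf := ((hdiff (x + t • v)).hasGradientAt).hasFDerivAt
    have := hf.comp_hasDerivAt t (hγ t)
    exact this
  have hgradcont : Continuous (gradient f) := by
    have : LipschitzWith L.toNNReal (gradient f) := by
      apply LipschitzWith.of_dist_le_mul
      intro a b
      simpa [dist_eq_norm, Real.coe_toNNReal L hL.le] using hsmooth a b
    exact this.continuous
  have hcont : Continuous (fun t : ℝ => ⟪gradient f (x + t • v), v⟫) := by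
    apply Continuous.inner
    · exact hgradcont.comp (by continuity)
    · exact continuous_const
  have hint : f y - f x = ∫ t in (0:ℝ)..1, ⟪gradient f (x + t • v), v⟫ := by
    have := intervalIntegral.integral_eq_sub_of_hasDerivAt
      (f := fun t : ℝ => f (x + t • v)) (fun t _ => hφ t)
      (hcont.intervalIntegrable 0 1)
    simp only [zero_smul, add_zero, one_smul] at this
    rw [this, hv]
    simp
  have hmono : (∫ t in (0:ℝ)..1, ⟪gradient f (x + t • v), v⟫)
      ≤ ∫ t in (0:ℝ)..1, (⟪gradient f x, v⟫ + t * (L * ‖v‖ ^ 2)) := by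
    apply intervalIntegral.integral_mono_on (by norm_num)
      (hcont.intervalIntegrable 0 1)
      ((by fun_prop : Continuous fun t : ℝ => ⟪gradient f x, v⟫ + t * (L * ‖v‖ ^ 2)).intervalIntegrable 0 1)
    intro t ht
    have h1 : ⟪gradient f (x + t • v), v⟫ - ⟪gradient f x, v⟫
        = ⟪gradient f (x + t • v) - gradient f x, v⟫ := by
      rw [inner_sub_left]
    have h2 : ⟪gradient f (x + t • v) - gradient f x, v⟫ ≤ t * (L * ‖v‖ ^ 2) := by
      calc ⟪gradient f (x + t • v) - gradient f x, v⟫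
          ≤ ‖gradient f (x + t • v) - gradient f x‖ * ‖v‖ := real_inner_le_norm _ _
        _ ≤ (L * ‖(x + t • v) - x‖) * ‖v‖ := by
            have := hsmooth (x + t • v) x
            nlinarith [norm_nonneg v]
        _ = t * (L * ‖v‖ ^ 2) := by
            have : ‖(x + t • v) - x‖ = |t| * ‖v‖ := by
              simp [norm_smul, Real.norm_eq_abs]
            rw [this, abs_of_nonneg ht.1]; ring
    linarith
  have hval : (∫ t in (0:ℝ)..1, (⟪gradient f x, v⟫ + t * (L * ‖v‖ ^ 2)))
      = ⟪gradient f x, v⟫ + L / 2 * ‖v‖ ^ 2 := by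
    rw [intervalIntegral.integral_add intervalIntegrable_const
      ((by fun_prop : Continuous fun t : ℝ => t * (L * ‖v‖ ^ 2)).intervalIntegrable 0 1)]
    rw [intervalIntegral.integral_mul_const, integral_id]
    simp
    ring
  linarith [hint ▸ hmono, hval ▸ hmono]

set_option maxHeartbeats 1000000 in
/-- **inexact accelerated coupling step, second form.** -/
theorem inexact_coupling_step_two {n : ℕ}
    (f : EuclideanSpace ℝ (Fin n) → ℝ) (L σ : ℝ) (hL : 0 < L) (hσ : 0 < σ)
    (hdiff : Differentiable ℝ f)
    (hsmooth : ∀ x y, ‖gradient f x - gradient f y‖ ≤ L * ‖x - y‖)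
    (hsc : ∀ x y, f x + ⟪gradient f x, y - x⟫ + σ / 2 * ‖y - x‖ ^ 2 ≤ f y)
    (xstar : EuclideanSpace ℝ (Fin n)) (hstar : ∀ y, f xstar ≤ f y)
    (τ η εt : ℝ) (hτ₀ : 0 < τ) (hτ₁ : τ < 1) (hη : η = 1 / (τ * L)) (hεt : 0 ≤ εt)
    (yk zk xk1 yk1 zk1 g : EuclideanSpace ℝ (Fin n))
    (hx : xk1 = τ • zk + (1 - τ) • yk)
    (hg : ‖g - gradient f xk1‖ ≤ εt)
    (hy : yk1 = xk1 - (1 / L) • g)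
    (hz : zk1 = (1 / (1 + η * σ)) • (zk + (η * σ) • xk1 - η • g)) :
    0 ≤ (1 - τ) * η / τ * (f yk - f xstar) - η / τ * (f yk1 - f xstar)
        + 1 / 2 * ‖zk - xstar‖ ^ 2 - (1 + η * σ / 2) / 2 * ‖zk1 - xstar‖ ^ 2
        + εt ^ 2 * (η / σ + η ^ 2 / 2) := by
  have hηpos : 0 < η := by rw [hη]; positivity
  -- T1 : descent step
  have hT1' : f yk1 ≤ f xk1 - 1/(2*L)*‖g‖^2 + 1/L*⟪g - gradient f xk1, g⟫ := by
    have hsl := smooth_upper f L hL hdiff hsmooth xk1 yk1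
    have hd : yk1 - xk1 = -((1/L) • g) := by rw [hy]; abel
    have h1 : ⟪gradient f xk1, yk1 - xk1⟫ = -(1/L * ⟪gradient f xk1, g⟫) := by
      rw [hd, inner_neg_right, real_inner_smul_right]
    have h2 : ‖yk1 - xk1‖^2 = (1/L)^2 * ‖g‖^2 := by
      rw [hd, norm_neg, norm_smul, mul_pow]
      congr 1
      rw [Real.norm_eq_abs, sq_abs]
    have h3 : ⟪g - gradient f xk1, g⟫ = ‖g‖^2 - ⟪gradient f xk1, g⟫ := by
      rw [inner_sub_left, real_inner_self_eq_norm_sq]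
    rw [h1, h2] at hsl
    have heq : f xk1 + -(1/L * ⟪gradient f xk1, g⟫) + L/2 * ((1/L)^2 * ‖g‖^2)
        = f xk1 - 1/(2*L)*‖g‖^2 + 1/L*(‖g‖^2 - ⟪gradient f xk1, g⟫) := by
      field_simp
      ring
    rw [h3]
    linarith [hsl, heq]
  have T1 : 0 ≤ η/τ * (f xk1 - 1/(2*L)*‖g‖^2 + 1/L*⟪g - gradient f xk1, g⟫ - f yk1) :=
    mul_nonneg (by positivity) (by linarith)
  -- T2 : strong convexity towards xstar
  have T2 : 0 ≤ η * (f xstar - f xk1 - ⟪gradient f xk1, xstar - xk1⟫ - σ/2*‖xstar - xk1‖^2) := by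
    have := hsc xk1 xstar
    exact mul_nonneg hηpos.le (by linarith)
  -- T3 : convexity towards yk
  have T3 : 0 ≤ (1-τ)*η/τ * (f yk - f xk1 - ⟪gradient f xk1, yk - xk1⟫) := by
    have := hsc xk1 yk
    have hnn : (0:ℝ) ≤ σ/2*‖yk - xk1‖^2 := by positivity
    have hc : (0:ℝ) ≤ (1-τ)*η/τ := by
      apply div_nonneg _ hτ₀.le
      apply mul_nonneg (by linarith) hηpos.le
    exact mul_nonneg hc (by linarith)
  -- T5 : quadratic bound on the mirror term
  have T5 : 0 ≤ η^2/2*‖gradient f xk1‖^2 - η*⟪gradient f xk1, zk - zk1⟫ + 1/2*‖zk - zk1‖^2 := by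
    have h0 : (0:ℝ) ≤ ‖η • gradient f xk1 - (zk - zk1)‖^2 := sq_nonneg _
    rw [norm_sub_sq_real, real_inner_smul_left, norm_smul, mul_pow, Real.norm_eq_abs, sq_abs] at h0
    nlinarith [h0]
  -- T6 : error term towards xstar
  have T6 : 0 ≤ η*σ/4*‖zk1 - xstar‖^2 + η/σ*εt^2 - η*⟪g - gradient f xk1, xstar - zk1⟫ := by
    have h6a : ⟪g - gradient f xk1, xstar - zk1⟫ ≤ εt * ‖zk1 - xstar‖ := by
      calc ⟪g - gradient f xk1, xstar - zk1⟫
          ≤ ‖g - gradient f xk1‖ * ‖xstar - zk1‖ := real_inner_le_norm _ _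
        _ ≤ εt * ‖xstar - zk1‖ := mul_le_mul_of_nonneg_right hg (norm_nonneg _)
        _ = εt * ‖zk1 - xstar‖ := by rw [norm_sub_rev]
    have key : σ/4*‖zk1 - xstar‖^2 + εt^2/σ - εt * ‖zk1 - xstar‖
        = (σ*‖zk1 - xstar‖ - 2*εt)^2/(4*σ) := by
      field_simp
      ring
    have key2 : 0 ≤ σ/4*‖zk1 - xstar‖^2 + εt^2/σ - εt * ‖zk1 - xstar‖ := by
      rw [key]; positivity
    have hnn := mul_nonneg hηpos.le (by linarith [h6a, key2] :
      (0:ℝ) ≤ σ/4*‖zk1 - xstar‖^2 + εt^2/σ - ⟪g - gradient f xk1, xstar - zk1⟫)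
    have hexp : η * (σ/4*‖zk1 - xstar‖^2 + εt^2/σ - ⟪g - gradient f xk1, xstar - zk1⟫)
        = η*σ/4*‖zk1 - xstar‖^2 + η/σ*εt^2 - η*⟪g - gradient f xk1, xstar - zk1⟫ := by
      field_simp
    linarith [hnn, hexp]
  -- T7 : error norm bound
  have T7 : 0 ≤ η^2/2*(εt^2 - ‖g - gradient f xk1‖^2) := by
    have : ‖g - gradient f xk1‖^2 ≤ εt^2 := by
      exact pow_le_pow_left₀ (norm_nonneg _) hg 2
    exact mul_nonneg (by positivity) (by linarith)
  -- T8 : dropped proximity term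
  have T8 : 0 ≤ η*σ/2*‖xk1 - zk1‖^2 := by positivity
  -- Master identity
  have ID : (1 - τ) * η / τ * (f yk - f xstar) - η / τ * (f yk1 - f xstar)
        + 1 / 2 * ‖zk - xstar‖ ^ 2 - (1 + η * σ / 2) / 2 * ‖zk1 - xstar‖ ^ 2
        + εt ^ 2 * (η / σ + η ^ 2 / 2)
      = η/τ * (f xk1 - 1/(2*L)*‖g‖^2 + 1/L*⟪g - gradient f xk1, g⟫ - f yk1)
      + η * (f xstar - f xk1 - ⟪gradient f xk1, xstar - xk1⟫ - σ/2*‖xstar - xk1‖^2)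
      + (1-τ)*η/τ * (f yk - f xk1 - ⟪gradient f xk1, yk - xk1⟫)
      + (η^2/2*‖gradient f xk1‖^2 - η*⟪gradient f xk1, zk - zk1⟫ + 1/2*‖zk - zk1‖^2)
      + (η*σ/4*‖zk1 - xstar‖^2 + η/σ*εt^2 - η*⟪g - gradient f xk1, xstar - zk1⟫)
      + η^2/2*(εt^2 - ‖g - gradient f xk1‖^2)
      + η*σ/2*‖xk1 - zk1‖^2 := by
    subst hη hx hz
    simp only [← real_inner_self_eq_norm_sq]
    simp only [inner_sub_left, inner_sub_right, inner_add_left, inner_add_right,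
      real_inner_smul_left, real_inner_smul_right, real_inner_comm]
    have h1 : (0:ℝ) < 1 + 1/(τ*L)*σ := by positivity
    field_simp
    ring
  linarith [T1, T2, T3, T5, T6, T7, T8, ID]
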